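/- Let (H,R,χ) be a finite-dimensional pre-Cartier quasitriangular bialgebra. Then the dual bialgebra H* with R° : H*⊗H* → k, R°(p⊗q) = (p⊗q)(R), and χ° : H*⊗H* → k, χ°(p⊗q) = (p⊗q)(χ), is a pre-Cartier coquasitriangular bialgebra: χ° satisfies (u χ°)∗m = m∗(u χ°), χ°(Id⊗m) = χ°₁₂ + (R°)⁻¹₁₂∗χ°₁₃∗R°₁₂ and χ°(m⊗Id) = χ°₂₃ + (R°)⁻¹₂₃∗χ°₁₃∗R°₂₃. If (H,R,χ) is Cartier then R°∗χ° = (χ°)ᵒᵖ∗R°. -/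

import Mathlib

open scoped TensorProduct

noncomputable section

variable (k H : Type*) [CommRing k] [Ring H] [Bialgebra k H]

/-- leg embedding `a ⊗ b ↦ a ⊗ b ⊗ 1` into `H ⊗ (H ⊗ H)`. -/
def leg12 : H ⊗[k] H →ₐ[k] H ⊗[k] (H ⊗[k] H) :=
  Algebra.TensorProduct.map (AlgHom.id k H) Algebra.TensorProduct.includeLeft

/-- leg embedding `a ⊗ b ↦ 1 ⊗ a ⊗ b`. -/
def leg23 : H ⊗[k] H →ₐ[k] H ⊗[k] (H ⊗[k] H) :=
  Algebra.TensorProduct.includeRight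

/-- leg embedding `a ⊗ b ↦ a ⊗ 1 ⊗ b`. -/
def leg13 : H ⊗[k] H →ₐ[k] H ⊗[k] (H ⊗[k] H) :=
  Algebra.TensorProduct.map (AlgHom.id k H) Algebra.TensorProduct.includeRight

/-- `(Id ⊗ Δ)` as an algebra map `H ⊗ H → H ⊗ (H ⊗ H)`. -/
def idComul : H ⊗[k] H →ₐ[k] H ⊗[k] (H ⊗[k] H) :=
  Algebra.TensorProduct.map (AlgHom.id k H) (Bialgebra.comulAlgHom k H)

/-- `(Δ ⊗ Id)` as an algebra map `H ⊗ H → H ⊗ (H ⊗ H)` (after reassociation). -/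
def comulId : H ⊗[k] H →ₐ[k] H ⊗[k] (H ⊗[k] H) :=
  (Algebra.TensorProduct.assoc k k k H H H).toAlgHom.comp
    (Algebra.TensorProduct.map (Bialgebra.comulAlgHom k H) (AlgHom.id k H))

/-- the flip `a ⊗ b ↦ b ⊗ a` as an algebra map. -/
def swapT : H ⊗[k] H →ₐ[k] H ⊗[k] H := (Algebra.TensorProduct.comm k H H).toAlgHom

/-- A quasitriangular structure on the bialgebra `H`. -/
structure QT where
  R : H ⊗[k] H
  Rinv : H ⊗[k] H
  mul_inv : R * Rinv = 1
  inv_mul : Rinv * R = 1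
  quasi_cocomm : ∀ h : H, swapT k H (Coalgebra.comul (R := k) h) * R = R * Coalgebra.comul (R := k) h
  hex1 : idComul k H R = leg13 k H R * leg12 k H R
  hex2 : comulId k H R = leg13 k H R * leg23 k H R

/-- A pre-Cartier quasitriangular bialgebra structure on `H`. -/
structure PreCartier extends QT k H where
  χ : H ⊗[k] H
  chi_comm : ∀ h : H, χ * Coalgebra.comul (R := k) h = Coalgebra.comul (R := k) h * χ
  chi_hex1 : idComul k H χ = leg12 k H χ + leg12 k H Rinv * leg13 k H χ * leg12 k H R
  chi_hex2 : comulId k H χ = leg23 k H χ + leg23 k H Rinv * leg13 k H χ * leg23 k H R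


variable {k H} in
private def eval2' (p q : Module.Dual k H) : H ⊗[k] H →ₗ[k] k :=
  (LinearMap.mul' k k).comp (TensorProduct.map p q)

variable {k H} in
private def eval3' (p q r : Module.Dual k H) : H ⊗[k] (H ⊗[k] H) →ₗ[k] k :=
  (LinearMap.mul' k k).comp (TensorProduct.map p (eval2' q r))

variable {k H} in
private lemma eval2'_tmul (p q : Module.Dual k H) (a b : H) :
    eval2' p q (a ⊗ₜ b) = p a * q b := rfl

variable {k H} in
private lemma eval3'_tmul (p q r : Module.Dual k H) (a : H) (y : H ⊗[k] H) :
    eval3' p q r (a ⊗ₜ y) = p a * eval2' q r y := rfl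

variable {k H} in
private lemma key1 (p q r : Module.Dual k H) (x : H ⊗[k] H) :
    eval2' p ((LinearMap.mul' k k).comp ((TensorProduct.map q r).comp
        (Coalgebra.comul (R := k) (A := H)))) x
      = eval3' p q r (idComul k H x) := by
  induction x using TensorProduct.induction_on with
  | zero => simp
  | tmul a b =>
    simp only [idComul, Algebra.TensorProduct.map_tmul, AlgHom.coe_id, id_eq,
      Bialgebra.comulAlgHom_apply, eval3'_tmul, eval2']
    rfl
  | add x y hx hy => simp [map_add, hx, hy]

variable {k H} in
private lemma key2 (p q r : Module.Dual k H) (x : H ⊗[k] H) :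
    eval2' ((LinearMap.mul' k k).comp ((TensorProduct.map p q).comp
        (Coalgebra.comul (R := k) (A := H)))) r x
      = eval3' p q r (comulId k H x) := by
  induction x using TensorProduct.induction_on with
  | zero => simp
  | tmul a b =>
    simp only [comulId, AlgHom.coe_comp, Function.comp_apply,
      Algebra.TensorProduct.map_tmul, AlgHom.coe_id, id_eq, Bialgebra.comulAlgHom_apply]
    have : ∀ y : H ⊗[k] H,
        (LinearMap.mul' k k) ((TensorProduct.map p q) y) * r b
          = eval3' p q r ((Algebra.TensorProduct.assoc k k k H H H).toAlgHom (y ⊗ₜ b)) := by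
      intro y
      induction y using TensorProduct.induction_on with
      | zero => simp
      | tmul c d =>
        simp [eval3'_tmul, eval2'_tmul, mul_assoc]
      | add y z hy hz =>
        simp only [TensorProduct.add_tmul, map_add, add_mul]
        rw [hy, hz]
    exact this _
  | add x y hx hy => simp [map_add, hx, hy]

variable {k H} in
private lemma leg12_eval (p q r : Module.Dual k H) (x : H ⊗[k] H) :
    eval3' p q r (leg12 k H x) = eval2' p q x * r 1 := by
  induction x using TensorProduct.induction_on with
  | zero => simp
  | tmul a b =>
    simp [leg12, eval3'_tmul, eval2'_tmul, Algebra.TensorProduct.includeLeft_apply,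
      mul_assoc, mul_comm (q b)]
  | add x y hx hy => simp [map_add, hx, hy, add_mul]

variable {k H} in
private lemma leg23_eval (p q r : Module.Dual k H) (x : H ⊗[k] H) :
    eval3' p q r (leg23 k H x) = p 1 * eval2' q r x := by
  induction x using TensorProduct.induction_on with
  | zero => simp
  | tmul a b =>
    simp [leg23, eval3'_tmul, eval2'_tmul]
  | add x y hx hy => simp [map_add, hx, hy, mul_add]

/-- for a finite-dimensional pre-Cartier quasitriangular bialgebra `(H,R,χ)`,
the dual bialgebra `H*` with `R°(p⊗q) = (p⊗q)(R)` and `χ°(p⊗q) = (p⊗q)(χ)` is pre-Cartier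
coquasitriangular; if `(H,R,χ)` is Cartier then `R°∗χ° = (χ°)ᵒᵖ∗R°`.  (The convolution
identities on `H*` are stated here elementwise, evaluated against functionals.) -/
theorem dual_preCartier [Module.Finite k H] (P : PreCartier k H) :
    let conv : Module.Dual k H → Module.Dual k H → Module.Dual k H := fun p q =>
      (LinearMap.mul' k k).comp ((TensorProduct.map p q).comp
        (Coalgebra.comul (R := k) (A := H)))
    let eval2 : Module.Dual k H → Module.Dual k H → (H ⊗[k] H →ₗ[k] k) := fun p q =>
      (LinearMap.mul' k k).comp (TensorProduct.map p q)
    let eval3 : Module.Dual k H → Module.Dual k H → Module.Dual k H →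
        (H ⊗[k] (H ⊗[k] H) →ₗ[k] k) := fun p q r =>
      (LinearMap.mul' k k).comp (TensorProduct.map p (eval2 q r))
    (∀ p q : Module.Dual k H, ∀ h : H,
      eval2 p q (P.χ * Coalgebra.comul (R := k) h)
        = eval2 p q (Coalgebra.comul (R := k) h * P.χ)) ∧
    (∀ p q r : Module.Dual k H,
      eval2 p (conv q r) P.χ
        = eval2 p q P.χ * r 1
          + eval3 p q r (leg12 k H P.Rinv * leg13 k H P.χ * leg12 k H P.R)) ∧
    (∀ p q r : Module.Dual k H,
      eval2 (conv p q) r P.χ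
        = p 1 * eval2 q r P.χ
          + eval3 p q r (leg23 k H P.Rinv * leg13 k H P.χ * leg23 k H P.R)) ∧
    (P.R * P.χ = swapT k H P.χ * P.R →
      ∀ p q : Module.Dual k H,
        eval2 p q (P.R * P.χ) = eval2 p q (swapT k H P.χ * P.R)) := by
  intro conv eval2 eval3
  refine ⟨fun p q h => by rw [P.chi_comm h], ?_, ?_, fun h p q => by rw [h]⟩
  · intro p q r
    show eval2' p (conv q r) P.χ
      = eval2' p q P.χ * r 1 + eval3' p q r (leg12 k H P.Rinv * leg13 k H P.χ * leg12 k H P.R)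
    rw [show eval2' p (conv q r) P.χ = eval3' p q r (idComul k H P.χ) from key1 p q r P.χ,
      P.chi_hex1, map_add, leg12_eval]
  · intro p q r
    show eval2' (conv p q) r P.χ
      = p 1 * eval2' q r P.χ + eval3' p q r (leg23 k H P.Rinv * leg13 k H P.χ * leg23 k H P.R)
    rw [show eval2' (conv p q) r P.χ = eval3' p q r (comulId k H P.χ) from key2 p q r P.χ,
      P.chi_hex2, map_add, leg23_eval]

end
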